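/- If A₁ is an (M₁, N₁; m, n)_{k₁}-sub-perfect map and A₂ is an (M₂, N₂; m, n)_{k₂}-sub-perfect map, then the superposition of A₁ and A₂ over the product alphabet is an (lcm(M₁,M₂), lcm(N₁,N₂); m, n)_{k₁k₂}-sub-perfect map. -/

import Mathlib

/-- `A` is a cyclic `M × N` array in which every `(m,n)`-pattern occurs at most once:
equal `(m,n)`-windows must come from equal (cyclic) positions. -/
def IsSubPerfectMap (M N m n : ℕ) {α : Type*} (A : ZMod M → ZMod N → α) : Prop :=
  ∀ p q : ZMod M × ZMod N,
    (∀ (a : Fin m) (b : Fin n),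
        A (p.1 + (a : ℕ)) (p.2 + (b : ℕ)) = A (q.1 + (a : ℕ)) (q.2 + (b : ℕ))) → p = q

lemma lcm_cast_inj {a b : ℕ} {x y : ZMod (Nat.lcm a b)}
    (ha : ZMod.castHom (Nat.dvd_lcm_left a b) (ZMod a) x =
          ZMod.castHom (Nat.dvd_lcm_left a b) (ZMod a) y)
    (hb : ZMod.castHom (Nat.dvd_lcm_right a b) (ZMod b) x =
          ZMod.castHom (Nat.dvd_lcm_right a b) (ZMod b) y) : x = y := by
  obtain ⟨u, rfl⟩ := ZMod.intCast_surjective x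
  obtain ⟨v, rfl⟩ := ZMod.intCast_surjective y
  rw [map_intCast, map_intCast, ZMod.intCast_eq_intCast_iff] at ha hb
  have da : (a : ℤ) ∣ v - u := (Int.modEq_iff_dvd.mp ha)
  have db : (b : ℤ) ∣ v - u := (Int.modEq_iff_dvd.mp hb)
  have : (Nat.lcm a b : ℤ) ∣ v - u := by
    have := Int.coe_lcm_dvd_iff.mpr ⟨da, db⟩
    simpa [Int.lcm, Int.natAbs_natCast] using this
  rw [ZMod.intCast_eq_intCast_iff, Int.modEq_iff_dvd]
  exact this

/-- If `A₁` is an `(M₁,N₁; m,n)_{k₁}`-sub-perfect map and `A₂` is an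
`(M₂,N₂; m,n)_{k₂}`-sub-perfect map, then their superposition over the product alphabet
(of size `k₁k₂`) is an `(lcm(M₁,M₂), lcm(N₁,N₂); m,n)_{k₁k₂}`-sub-perfect map. -/
theorem superposition_subPerfect (M₁ N₁ M₂ N₂ m n k₁ k₂ : ℕ)
    (A₁ : ZMod M₁ → ZMod N₁ → Fin k₁) (A₂ : ZMod M₂ → ZMod N₂ → Fin k₂)
    (h₁ : IsSubPerfectMap M₁ N₁ m n A₁) (h₂ : IsSubPerfectMap M₂ N₂ m n A₂) :
    IsSubPerfectMap (Nat.lcm M₁ M₂) (Nat.lcm N₁ N₂) m n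
      (fun (i : ZMod (Nat.lcm M₁ M₂)) (j : ZMod (Nat.lcm N₁ N₂)) =>
        (A₁ (ZMod.castHom (Nat.dvd_lcm_left M₁ M₂) (ZMod M₁) i)
            (ZMod.castHom (Nat.dvd_lcm_left N₁ N₂) (ZMod N₁) j),
         A₂ (ZMod.castHom (Nat.dvd_lcm_right M₁ M₂) (ZMod M₂) i)
            (ZMod.castHom (Nat.dvd_lcm_right N₁ N₂) (ZMod N₂) j))) := by
  intro p q h
  have e1 : (ZMod.castHom (Nat.dvd_lcm_left M₁ M₂) (ZMod M₁) p.1,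
             ZMod.castHom (Nat.dvd_lcm_left N₁ N₂) (ZMod N₁) p.2) =
            (ZMod.castHom (Nat.dvd_lcm_left M₁ M₂) (ZMod M₁) q.1,
             ZMod.castHom (Nat.dvd_lcm_left N₁ N₂) (ZMod N₁) q.2) := by
    apply h₁
    intro a b
    have := congrArg Prod.fst (h a b)
    simpa [map_add, map_natCast] using this
  have e2 : (ZMod.castHom (Nat.dvd_lcm_right M₁ M₂) (ZMod M₂) p.1,
             ZMod.castHom (Nat.dvd_lcm_right N₁ N₂) (ZMod N₂) p.2) =
            (ZMod.castHom (Nat.dvd_lcm_right M₁ M₂) (ZMod M₂) q.1,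
             ZMod.castHom (Nat.dvd_lcm_right N₁ N₂) (ZMod N₂) q.2) := by
    apply h₂
    intro a b
    have := congrArg Prod.snd (h a b)
    simpa [map_add, map_natCast] using this
  obtain ⟨e11, e12⟩ := Prod.mk.injEq .. ▸ e1
  obtain ⟨e21, e22⟩ := Prod.mk.injEq .. ▸ e2
  exact Prod.ext (lcm_cast_inj e11 e21) (lcm_cast_inj e12 e22)
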